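/- Let K be a field, let n ≥ 1, d ≥ 1, and fix a d^{n}-cage over K. For every nonzero vector λ = (λ_1,…,λ_n) ∈ K^n, the polynomial P_λ := ∑_{j=1}^n λ_j·𝓛_j satisfies ∇P_λ(p_I) ≠ 0 for every node p_I of the cage. (Every degree-d hypersurface through all the nodes of the cage is smooth at each node.) -/

import Mathlib

open MvPolynomial Finsupp

lemma degree_one_exists {σ : Type*} (m : σ →₀ ℕ) (h : Finsupp.degree m = 1) :
    ∃ l, m = Finsupp.single l 1 := by
  have h0 : m ≠ 0 := by rintro rfl; simp at h
  have hle : m.support.card ≤ 1 := by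
    calc m.support.card = ∑ _i ∈ m.support, 1 := (Finset.card_eq_sum_ones _)
    _ ≤ ∑ i ∈ m.support, m i := Finset.sum_le_sum (fun i hi =>
        Nat.one_le_iff_ne_zero.mpr (Finsupp.mem_support_iff.mp hi))
    _ = 1 := h
  have hge : 1 ≤ m.support.card :=
    Finset.card_pos.mpr (Finsupp.support_nonempty_iff.mpr h0)
  obtain ⟨a, b, hb, rfl⟩ := Finsupp.card_support_eq_one'.mp (le_antisymm hle hge)
  have hdeg : Finsupp.degree (Finsupp.single a b) = b := by
    rw [Finsupp.degree_apply, Finsupp.support_single_ne_zero _ hb, Finset.sum_singleton,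
      Finsupp.single_eq_same]
  have : b = 1 := by rw [← hdeg, h]
  exact ⟨a, by rw [this]⟩

lemma homog_one_rep {K : Type*} [CommRing K] {σ : Type*} [Fintype σ] [DecidableEq σ]
    (Q : MvPolynomial σ K) (hQ : Q.IsHomogeneous 1) :
    Q = ∑ l : σ, MvPolynomial.C (Q.coeff (Finsupp.single l 1)) * MvPolynomial.X l := by
  apply MvPolynomial.ext
  intro m
  rw [MvPolynomial.coeff_sum]
  simp only [MvPolynomial.coeff_C_mul, MvPolynomial.coeff_X']
  by_cases hm : ∃ l, m = Finsupp.single l 1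
  · obtain ⟨l0, rfl⟩ := hm
    rw [Finset.sum_eq_single l0]
    · simp
    · intro l _ hl
      have : Finsupp.single l 1 ≠ Finsupp.single l0 1 := by
        intro h; exact hl (Finsupp.single_left_injective one_ne_zero h)
      simp [this]
    · simp
  · have h1 : Q.coeff m = 0 := by
      by_contra hc
      have := hQ hc
      rw [Pi.one_def, ← Finsupp.degree_eq_weight_one] at this
      exact hm (degree_one_exists m this)
    rw [h1]
    symm
    apply Finset.sum_eq_zero
    intro l _
    have : Finsupp.single l 1 ≠ m := fun h => hm ⟨l, h.symm⟩
    simp [this]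

lemma pderiv_homog_one {K : Type*} [CommRing K] {σ : Type*} [Fintype σ] [DecidableEq σ]
    (Q : MvPolynomial σ K) (hQ : Q.IsHomogeneous 1) (l : σ) :
    MvPolynomial.pderiv l Q = MvPolynomial.C (Q.coeff (Finsupp.single l 1)) := by
  conv_lhs => rw [homog_one_rep Q hQ]
  rw [map_sum]
  rw [Finset.sum_eq_single l]
  · simp [MvPolynomial.pderiv_C_mul]
  · intro b _ hb
    rw [MvPolynomial.pderiv_C_mul, MvPolynomial.pderiv_X_of_ne hb, mul_zero]
  · simp

/-- Every degree-`d` hypersurface `{P_λ = 0}` through all the nodes of a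
`d^{n}`-cage (with `λ ≠ 0`) has nonvanishing gradient at each node, i.e. it is
smooth at each node of the cage. -/
theorem cage_hypersurface_smooth_at_nodes
    {K : Type*} [Field K] (n d : ℕ) (hn : 1 ≤ n) (hd : 1 ≤ d)
    (L : Fin n → Fin d → MvPolynomial (Fin (n + 1)) K)
    (hL : ∀ j i, (L j i).IsHomogeneous 1)
    (p : (Fin n → Fin d) → Fin (n + 1) → K)
    (hp0 : ∀ I, p I ≠ 0)
    (hind : ∀ I : Fin n → Fin d, LinearIndependent K fun j => L j (I j))
    (hline : ∀ (I : Fin n → Fin d) (v : Fin (n + 1) → K),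
      (∀ j, MvPolynomial.eval v (L j (I j)) = 0) ↔ ∃ c : K, v = c • p I)
    (hne : ∀ (j : Fin n) (i : Fin d) (I : Fin n → Fin d),
      i ≠ I j → MvPolynomial.eval (p I) (L j i) ≠ 0)
    (lam : Fin n → K) (hlam : lam ≠ 0) :
    ∀ I : Fin n → Fin d,
      (fun l : Fin (n + 1) =>
        MvPolynomial.eval (p I)
          (MvPolynomial.pderiv l (∑ j, MvPolynomial.C (lam j) * ∏ i, L j i)))
        ≠ 0 := by
  intro I hgrad
  classical
  set v := p I with hv
  have hA0 : ∀ j, MvPolynomial.eval v (L j (I j)) = 0 :=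
    (hline I v).mpr ⟨1, (one_smul K v).symm⟩
  set M : Fin n → K := fun j => ∏ i ∈ Finset.univ.erase (I j),
    MvPolynomial.eval v (L j i) with hM
  have hMne : ∀ j, M j ≠ 0 := by
    intro j
    apply Finset.prod_ne_zero_iff.mpr
    intro i hi
    exact hne j i I (Finset.ne_of_mem_erase hi)
  set a : Fin n → K := fun j => lam j * M j with ha
  have key : ∀ l, ∑ j, a j * (L j (I j)).coeff (Finsupp.single l 1) = 0 := by
    intro l
    have h := congrFun hgrad l
    simp only [Pi.zero_apply] at h
    rw [map_sum, map_sum] at h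
    have expand : ∀ j : Fin n,
        MvPolynomial.eval v (MvPolynomial.pderiv l
          (MvPolynomial.C (lam j) * ∏ i, L j i))
        = a j * (L j (I j)).coeff (Finsupp.single l 1) := by
      intro j
      rw [MvPolynomial.pderiv_C_mul,
        ← Finset.mul_prod_erase Finset.univ (L j) (Finset.mem_univ (I j)),
        MvPolynomial.pderiv_mul, pderiv_homog_one _ (hL j (I j)) l]
      simp only [map_mul, map_add, MvPolynomial.eval_C, hA0 j, zero_mul, add_zero,
        mul_zero, map_prod]
      rw [ha]
      ring
    rw [Finset.sum_congr rfl (fun j _ => expand j)] at h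
    exact h
  have hhom : (∑ j, a j • L j (I j)).IsHomogeneous 1 := by
    rw [← MvPolynomial.mem_homogeneousSubmodule]
    exact Submodule.sum_mem _ fun j _ => Submodule.smul_mem _ _
      ((MvPolynomial.mem_homogeneousSubmodule _ _).mpr (hL j (I j)))
  have hQ : ∑ j, a j • L j (I j) = 0 := by
    rw [homog_one_rep _ hhom]
    apply Finset.sum_eq_zero
    intro l _
    have hc : (∑ j, a j • L j (I j)).coeff (Finsupp.single l 1)
        = ∑ j, a j * (L j (I j)).coeff (Finsupp.single l 1) := by
      rw [MvPolynomial.coeff_sum]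
      exact Finset.sum_congr rfl fun j _ => MvPolynomial.coeff_smul _ _ _
    rw [hc, key l, map_zero, zero_mul]
  have hzero := Fintype.linearIndependent_iff.mp (hind I) a hQ
  apply hlam
  funext j
  have := hzero j
  rw [ha] at this
  rcases mul_eq_zero.mp this with h | h
  · exact h
  · exact absurd h (hMne j)
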